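/- Let L ⊆ Σ^ω be accepted by some Büchi automaton (i.e. L is ω-regular). If for every finite word x ∈ Σ* there exists a finite word w ∈ Σ* such that xwΣ^ω ⊆ L or xwΣ^ω ∩ L = ∅, then L is monitorable (some monitor for L exists). -/

import Mathlib

/-- Concatenation of a finite word with an infinite word. -/
def cat {A : Type*} (x : List A) (α : ℕ → A) : ℕ → A :=
  fun n => if h : n < x.length then x[n] else α (n - x.length)

/-- A monitor: a finite deterministic transition system with designated
absorbing states `⊥` (bot) and `⊤` (top), at least one of which is present,
such that from every state some present sink is reachable. -/
structure Monitor (A : Type*) where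
  Q : Type
  finQ : Finite Q
  δ : Q → A → Q
  init : Q
  bot : Option Q
  top : Option Q
  sink_exists : bot.isSome ∨ top.isSome
  bot_ne_top : ∀ p q, bot = some p → top = some q → p ≠ q
  bot_absorb : ∀ p a, bot = some p → δ p a = p
  top_absorb : ∀ p a, top = some p → δ p a = p
  reach : ∀ q : Q, ∃ w : List A, bot = some (w.foldl δ q) ∨ top = some (w.foldl δ q)

/-- `M` is a monitor for the language `L ⊆ Σ^ω`: whenever the run from the
initial state on a finite word `u` reaches `⊥` then `uΣ^ω ∩ L = ∅`, and
whenever it reaches `⊤` then `uΣ^ω ⊆ L`. -/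
def Monitor.IsMonitorFor {A : Type*} (M : Monitor A) (L : Set (ℕ → A)) : Prop :=
  ∀ u : List A,
    (M.bot = some (u.foldl M.δ M.init) → ∀ α, cat u α ∉ L) ∧
    (M.top = some (u.foldl M.δ M.init) → ∀ α, cat u α ∈ L)

/-- A language is monitorable if some monitor for it exists. -/
def Monitorable {A : Type*} (L : Set (ℕ → A)) : Prop :=
  ∃ M : Monitor A, M.IsMonitorFor L

/-- Büchi automaton: finite state set, transition relation, initial and final states. -/
structure BA (A : Type*) where
  Q : Type
  finQ : Finite Q
  step : Q → A → Q → Prop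
  I : Set Q
  F : Set Q

/-- `B` accepts `α` if some infinite run on `α` starting in `I` visits `F` infinitely often. -/
def BA.Accepts {A : Type*} (B : BA A) (α : ℕ → A) : Prop :=
  ∃ ρ : ℕ → B.Q, ρ 0 ∈ B.I ∧ (∀ n, B.step (ρ n) (α n) (ρ (n + 1))) ∧
    ∀ n, ∃ m, n ≤ m ∧ ρ m ∈ B.F

def BA.Lang {A : Type*} (B : BA A) : Set (ℕ → A) := {α | B.Accepts α}

namespace Stmt17

variable {A : Type*}

/-- Prepend one value to an infinite sequence. -/
def shunt {Q : Type*} (q : Q) (ρ : ℕ → Q) : ℕ → Q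
  | 0 => q
  | n + 1 => ρ n

@[simp] lemma shunt_zero {Q : Type*} (q : Q) (ρ : ℕ → Q) : shunt q ρ 0 = q := rfl
@[simp] lemma shunt_succ {Q : Type*} (q : Q) (ρ : ℕ → Q) (n : ℕ) : shunt q ρ (n + 1) = ρ n := rfl

def post (B : BA A) (S : Set B.Q) (a : A) : Set B.Q := {q' | ∃ q ∈ S, B.step q a q'}

def reach (B : BA A) (u : List A) : Set B.Q := u.foldl (post B) B.I

def AccFrom (B : BA A) (q : B.Q) (α : ℕ → A) : Prop :=
  ∃ ρ : ℕ → B.Q, ρ 0 = q ∧ (∀ n, B.step (ρ n) (α n) (ρ (n + 1))) ∧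
    ∀ n, ∃ m, n ≤ m ∧ ρ m ∈ B.F

def Acc (B : BA A) (S : Set B.Q) (α : ℕ → A) : Prop := ∃ q ∈ S, AccFrom B q α

def Good (B : BA A) (S : Set B.Q) : Prop := ∀ α, Acc B S α
def Bad (B : BA A) (S : Set B.Q) : Prop := ∀ α, ¬ Acc B S α

lemma mem_foldl_post (B : BA A) (u : List A) (S : Set B.Q) (q : B.Q) :
    q ∈ u.foldl (post B) S ↔
      ∃ f : ℕ → B.Q, f 0 ∈ S ∧ f u.length = q ∧
        ∀ i, (hi : i < u.length) → B.step (f i) (u[i]) (f (i + 1)) := by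
  induction u generalizing S with
  | nil =>
    simp only [List.foldl_nil, List.length_nil]
    constructor
    · intro hq; exact ⟨fun _ => q, hq, rfl, fun i hi => absurd hi (Nat.not_lt_zero i)⟩
    · rintro ⟨f, h0, hl, _⟩; rwa [← hl]
  | cons a u ih =>
    simp only [List.foldl_cons, List.length_cons]
    rw [ih]
    constructor
    · rintro ⟨f, hf0, hfl, hfs⟩
      obtain ⟨q0, hq0, hstep⟩ := hf0
      refine ⟨shunt q0 f, hq0, hfl, ?_⟩
      intro i hi
      cases i with
      | zero => simpa using hstep
      | succ j =>
        have hj : j < u.length := Nat.lt_of_succ_lt_succ hi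
        simpa using hfs j hj
    · rintro ⟨g, hg0, hgl, hgs⟩
      refine ⟨fun n => g (n + 1), ⟨g 0, hg0, ?_⟩, hgl, ?_⟩
      · have := hgs 0 (Nat.succ_pos _); simpa using this
      · intro i hi
        have := hgs (i + 1) (Nat.succ_lt_succ hi)
        simpa using this

lemma accepts_cat (B : BA A) (u : List A) (α : ℕ → A) :
    B.Accepts (cat u α) ↔ Acc B (reach B u) α := by
  constructor
  · rintro ⟨ρ, hI, hstep, hF⟩
    refine ⟨ρ u.length, ?_, fun n => ρ (n + u.length), by simp, ?_, ?_⟩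
    · rw [reach, mem_foldl_post]
      refine ⟨ρ, hI, rfl, ?_⟩
      intro i hi
      have := hstep i
      rwa [show cat u α i = u[i] from dif_pos hi] at this
    · intro n
      show B.step (ρ (n + u.length)) (α n) (ρ (n + 1 + u.length))
      have := hstep (n + u.length)
      rw [show cat u α (n + u.length) = α n from by
        rw [cat]; rw [dif_neg (by omega)]; congr 1; omega] at this
      rw [show n + 1 + u.length = n + u.length + 1 from by omega]
      exact this
    · intro n
      obtain ⟨m, hm, hmF⟩ := hF (n + u.length)
      refine ⟨m - u.length, by omega, ?_⟩
      show ρ (m - u.length + u.length) ∈ B.F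
      rwa [show m - u.length + u.length = m from by omega]
  · rintro ⟨q, hq, σ, hσ0, hσs, hσF⟩
    rw [reach, mem_foldl_post] at hq
    obtain ⟨f, hf0, hfl, hfs⟩ := hq
    refine ⟨fun n => if n < u.length then f n else σ (n - u.length), ?_, ?_, ?_⟩
    · by_cases h0 : 0 < u.length
      · simpa [h0] using hf0
      · have : u.length = 0 := by omega
        simp only [h0, if_false]
        rw [show (0 : ℕ) - u.length = 0 from by omega, hσ0, ← hfl, this]
        exact hf0
    · intro n
      by_cases h1 : n + 1 < u.length
      · have hn : n < u.length := by omega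
        simp only [h1, hn, if_pos]
        rw [show cat u α n = u[n] from dif_pos hn]
        exact hfs n hn
      · by_cases h2 : n < u.length
        · -- n + 1 = u.length
          have he : n + 1 = u.length := by omega
          simp only [h1, h2, if_pos, if_neg, if_true, if_false]
          rw [show n + 1 - u.length = 0 from by omega, hσ0, ← hfl, ← he,
            show cat u α n = u[n] from dif_pos h2]
          exact hfs n h2
        · have hn : ¬ n + 1 < u.length := h1
          simp only [h2, hn, if_false]
          rw [show n + 1 - u.length = (n - u.length) + 1 from by omega,
            show cat u α n = α (n - u.length) from dif_neg h2]
          exact hσs (n - u.length)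
    · intro n
      obtain ⟨m, hm, hmF⟩ := hσF n
      refine ⟨m + u.length, by omega, ?_⟩
      simp only [show ¬ m + u.length < u.length from by omega, if_false]
      rwa [show m + u.length - u.length = m from by omega]

lemma good_post (B : BA A) {S : Set B.Q} (hS : Good B S) (a : A) : Good B (post B S a) := by
  intro α
  obtain ⟨q, hq, ρ, hρ0, hρs, hρF⟩ := hS (cat [a] α)
  refine ⟨ρ 1, ⟨q, hq, ?_⟩, fun n => ρ (n + 1), rfl, ?_, ?_⟩
  · have := hρs 0
    rw [hρ0] at this
    simpa [cat] using this
  · intro n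
    have := hρs (n + 1)
    rwa [show cat [a] α (n + 1) = α n from by simp [cat]] at this
  · intro n
    obtain ⟨m, hm, hmF⟩ := hρF (n + 1)
    refine ⟨m - 1, by omega, ?_⟩
    show ρ (m - 1 + 1) ∈ B.F
    rwa [show m - 1 + 1 = m from by omega]

lemma bad_post (B : BA A) {S : Set B.Q} (hS : Bad B S) (a : A) : Bad B (post B S a) := by
  rintro α ⟨q', ⟨q, hq, hst⟩, ρ, hρ0, hρs, hρF⟩
  refine hS (cat [a] α) ⟨q, hq, shunt q ρ, rfl, ?_, ?_⟩
  · intro n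
    cases n with
    | zero =>
      simp only [shunt_zero, shunt_succ]
      rw [show cat [a] α 0 = a from by simp [cat], hρ0]
      exact hst
    | succ j =>
      simp only [shunt_succ]
      rw [show cat [a] α (j + 1) = α j from by simp [cat]]
      exact hρs j
  · intro n
    obtain ⟨m, hm, hmF⟩ := hρF n
    exact ⟨m + 1, by omega, by simpa using hmF⟩

lemma not_good_bad (B : BA A) [Nonempty A] {S : Set B.Q} (hg : Good B S) (hb : Bad B S) : False :=
  hb (fun _ => Classical.arbitrary A) (hg _)

abbrev RS (B : BA A) : Type := {S : Set B.Q // ∃ u, reach B u = S}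

abbrev MQ (B : BA A) : Type := RS B ⊕ Bool

open Classical in
noncomputable def classify (B : BA A) (s : RS B) : MQ B :=
  if Bad B s.1 then Sum.inr false else if Good B s.1 then Sum.inr true else Sum.inl s

def postRS (B : BA A) (s : RS B) (a : A) : RS B :=
  ⟨post B s.1 a, by
    obtain ⟨u, hu⟩ := s.2
    exact ⟨u ++ [a], by rw [reach, List.foldl_append, List.foldl_cons, List.foldl_nil, ← reach, hu]⟩⟩

noncomputable def mδ (B : BA A) : MQ B → A → MQ B
  | Sum.inr b, _ => Sum.inr b
  | Sum.inl s, a => classify B (postRS B s a)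

lemma classify_bad (B : BA A) {s : RS B} (hb : Bad B s.1) : classify B s = Sum.inr false := by
  simp [classify, hb]

lemma classify_good (B : BA A) [Nonempty A] {s : RS B} (hg : Good B s.1) :
    classify B s = Sum.inr true := by
  have hb : ¬ Bad B s.1 := fun hb => not_good_bad B hg hb
  simp [classify, hb, hg]

lemma bad_of_classify (B : BA A) {s : RS B} (h : classify B s = Sum.inr false) : Bad B s.1 := by
  unfold classify at h
  split_ifs at h with h1 h2
  · exact h1
  · exact Bool.noConfusion (Sum.inr.inj h)

lemma good_of_classify (B : BA A) {s : RS B} (h : classify B s = Sum.inr true) : Good B s.1 := by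
  unfold classify at h
  split_ifs at h with h1 h2
  · exact Bool.noConfusion (Sum.inr.inj h)
  · exact h2

lemma mδ_classify (B : BA A) [Nonempty A] (s : RS B) (a : A) :
    mδ B (classify B s) a = classify B (postRS B s a) := by
  by_cases hb : Bad B s.1
  · rw [classify_bad B hb, classify_bad B (bad_post B hb a)]
    rfl
  · by_cases hg : Good B s.1
    · rw [classify_good B hg, classify_good B (good_post B hg a)]
      rfl
    · rw [show classify B s = Sum.inl s from by simp [classify, hb, hg]]
      rfl

lemma foldl_mδ_classify (B : BA A) [Nonempty A] (w : List A) (s : RS B) :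
    w.foldl (mδ B) (classify B s) = classify B (w.foldl (postRS B) s) := by
  induction w generalizing s with
  | nil => rfl
  | cons a w ih =>
    rw [List.foldl_cons, mδ_classify, ih, List.foldl_cons]

lemma val_foldl_postRS (B : BA A) (w : List A) (s : RS B) :
    (w.foldl (postRS B) s).1 = w.foldl (post B) s.1 := by
  induction w generalizing s with
  | nil => rfl
  | cons a w ih => rw [List.foldl_cons, ih, List.foldl_cons]; rfl

end Stmt17

open Stmt17

/-- For ω-regular `L`: if for every finite word `x` there is `w` with
`xwΣ^ω ⊆ L` or `xwΣ^ω ∩ L = ∅`, then `L` is monitorable. -/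


theorem stmt17 {A : Type*} [Fintype A] [Nonempty A] (L : Set (ℕ → A))
    (B : BA A) (hB : B.Lang = L)
    (h : ∀ x : List A, ∃ w : List A,
      (∀ α, cat (x ++ w) α ∈ L) ∨ (∀ α, cat (x ++ w) α ∉ L)) :
    Monitorable L := by
  classical
  subst hB
  haveI : Finite B.Q := B.finQ
  haveI : Finite (RS B) := Subtype.finite
  have hgood : ∀ x : List A, (∀ α, cat x α ∈ B.Lang) → Good B (reach B x) :=
    fun x hx α => (accepts_cat B x α).1 (hx α)
  have hbad : ∀ x : List A, (∀ α, cat x α ∉ B.Lang) → Bad B (reach B x) :=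
    fun x hx α ha => hx α ((accepts_cat B x α).2 ha)
  refine ⟨{
    Q := MQ B
    finQ := by unfold MQ; infer_instance
    δ := mδ B
    init := classify B ⟨B.I, ⟨[], rfl⟩⟩
    bot := some (Sum.inr false)
    top := some (Sum.inr true)
    sink_exists := Or.inl rfl
    bot_ne_top := by
      rintro p q hp hq
      rw [Option.some_inj] at hp hq
      rw [← hp, ← hq]
      exact fun hc => Bool.noConfusion (Sum.inr.inj hc)
    bot_absorb := by
      rintro p a hp
      rw [Option.some_inj] at hp
      rw [← hp]; rfl
    top_absorb := by
      rintro p a hp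
      rw [Option.some_inj] at hp
      rw [← hp]; rfl
    reach := ?_ }, ?_⟩
  · rintro (⟨S, u, hu⟩ | b)
    · set a0 := Classical.arbitrary A with ha0
      obtain ⟨w, hw⟩ := h (u ++ [a0])
      refine ⟨a0 :: w, ?_⟩
      have hval : (w.foldl (postRS B) (postRS B ⟨S, u, hu⟩ a0)).1 =
          reach B ((u ++ [a0]) ++ w) := by
        rw [val_foldl_postRS]
        show w.foldl (post B) (post B S a0) = _
        rw [reach, List.foldl_append, List.foldl_append, List.foldl_cons, List.foldl_nil,
          ← reach, hu]
      have hrun : (a0 :: w).foldl (mδ B) (Sum.inl ⟨S, u, hu⟩) =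
          classify B (w.foldl (postRS B) (postRS B ⟨S, u, hu⟩ a0)) := by
        rw [List.foldl_cons]
        exact foldl_mδ_classify B w _
      rcases hw with hw | hw
      · right
        rw [hrun, classify_good B (show Good B _ from hval ▸ hgood _ hw)]
      · left
        rw [hrun, classify_bad B (show Bad B _ from hval ▸ hbad _ hw)]
    · exact ⟨[], by cases b <;> simp [List.foldl_nil]⟩
  · intro u
    have hrun : u.foldl (mδ B) (classify B ⟨B.I, ⟨[], rfl⟩⟩) =
        classify B (u.foldl (postRS B) ⟨B.I, ⟨[], rfl⟩⟩) := foldl_mδ_classify B u _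
    have hval : (u.foldl (postRS B) (⟨B.I, ⟨[], rfl⟩⟩ : RS B)).1 = reach B u := by
      rw [val_foldl_postRS]; rfl
    constructor
    · intro hbot α hmem
      rw [show (u.foldl (mδ B) (classify B ⟨B.I, ⟨[], rfl⟩⟩)) =
          classify B (u.foldl (postRS B) ⟨B.I, ⟨[], rfl⟩⟩) from hrun, Option.some_inj] at hbot
      have hb := bad_of_classify B hbot.symm
      rw [hval] at hb
      exact hb α ((accepts_cat B u α).1 hmem)
    · intro htop α
      rw [show (u.foldl (mδ B) (classify B ⟨B.I, ⟨[], rfl⟩⟩)) =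
          classify B (u.foldl (postRS B) ⟨B.I, ⟨[], rfl⟩⟩) from hrun, Option.some_inj] at htop
      have hg := good_of_classify B htop.symm
      rw [hval] at hg
      exact (accepts_cat B u α).2 (hg α)
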